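/- arXiv:2002.03539 — 8 statements merged into one kernel-verified Lean document; each statement's English description precedes it below -/
import Mathlib

section
/- For every 3-regular bipartite graph G, there exist two linear orders on the vertex set of G such that for every edge {u,v} of G, the vertices u and v are consecutive (adjacent positions) in at least one of the two linear orders. -/
open Finset

/-- Two elements are consecutive in a linear order `L` if they differ and no
element lies strictly between them. -/
def Consec {V : Type*} (L : LinearOrder V) (u v : V) : Prop :=
  u ≠ v ∧ ∀ w : V, ¬ ((L.lt u w ∧ L.lt w v) ∨ (L.lt v w ∧ L.lt w u))

lemma consecSymm {V : Type*} {L : LinearOrder V} {a b : V} (h : Consec L a b) :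
    Consec L b a :=
  ⟨h.1.symm, fun w hw => h.2 w hw.symm⟩

lemma orbitTwoEx {V : Type*} [Fintype V] (χ : V → Fin 2) (ρ : Equiv.Perm V)
    (hρc : ∀ v, χ (ρ v) ≠ χ v) (hρsq : ∀ v, ρ (ρ v) ≠ v) (v : V) :
    ∃ u u' : V, u ≠ u' ∧ χ u = 1 ∧ χ u' = 1 ∧ ρ.SameCycle v u ∧ ρ.SameCycle v u' := by
  have f2a : ∀ x : Fin 2, x ≠ 0 → x = 1 := by decide
  have f2b : ∀ x : Fin 2, x ≠ 1 → x = 0 := by decide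
  have f2c : ∀ a b c : Fin 2, a ≠ b → c ≠ b → a = c := by decide
  have step : ∀ w, ρ.SameCycle w (ρ w) := fun w => ⟨1, by simp⟩
  obtain ⟨u, hu1, huv⟩ : ∃ u, χ u = 1 ∧ ρ.SameCycle v u := by
    by_cases h : χ v = 1
    · exact ⟨v, h, Equiv.Perm.SameCycle.refl _ _⟩
    · exact ⟨ρ v, f2a _ (fun h0 => hρc v (h0.trans (f2b _ h).symm)), step v⟩
  refine ⟨u, ρ (ρ u), fun h => hρsq u h.symm, hu1, ?_, huv,
    huv.trans ((step u).trans (step (ρ u)))⟩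
  have := f2c (χ (ρ (ρ u))) (χ (ρ u)) (χ u) (hρc (ρ u)) (hρc u).symm
  rw [this, hu1]

lemma mkPermAux {V : Type*} (χ : V → Fin 2) (f g : V → V)
    (hf : ∀ v, f (f v) = v) (hg : ∀ v, g (g v) = v)
    (hfc : ∀ v, χ (f v) ≠ χ v) (hgc : ∀ v, χ (g v) ≠ χ v) :
    Function.LeftInverse (fun v => if χ v = 0 then g v else f v)
      (fun v => if χ v = 0 then f v else g v) := by
  have f2a : ∀ x : Fin 2, x ≠ 0 → x = 1 := by decide
  have f2b : ∀ x : Fin 2, x ≠ 1 → x = 0 := by decide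
  intro v
  by_cases h : χ v = 0
  · have h1 : ¬ χ (f v) = 0 := fun h0 => hfc v (h0.trans h.symm)
    simp only [h, if_pos, if_true]
    simp [h1, hf v]
  · have h1 : χ v = 1 := f2a _ h
    have h2 : χ (g v) = 0 := f2b _ (fun h0 => hgc v (h0.trans h1.symm))
    simp only [h, if_neg, if_false]
    simp [h2, hg v]



lemma myDoubleCount {ι V : Type*} [DecidableEq V] [DecidableEq ι] (s : Finset ι)
    (t : ι → Finset V) :
    ∑ i ∈ s, (t i).card = ∑ v ∈ s.biUnion t, (s.filter (fun i => v ∈ t i)).card := by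
  calc ∑ i ∈ s, (t i).card
      = ∑ i ∈ s, ∑ v ∈ s.biUnion t, (if v ∈ t i then 1 else 0) := by
        refine Finset.sum_congr rfl fun i hi => ?_
        rw [← Finset.card_filter]
        congr 1
        rw [Finset.filter_mem_eq_inter]
        exact (Finset.inter_eq_right.mpr (Finset.subset_biUnion_of_mem t hi)).symm
    _ = ∑ v ∈ s.biUnion t, (s.filter (fun i => v ∈ t i)).card := by
        rw [Finset.sum_comm]
        refine Finset.sum_congr rfl fun v hv => ?_
        rw [Finset.card_filter]

lemma myHall {ι V : Type*} [DecidableEq V] [DecidableEq ι] [Fintype ι] (t : ι → Finset V)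
    (k : ℕ) (hk : 0 < k) (hlb : ∀ i, k ≤ (t i).card)
    (hub : ∀ v : V, ((univ : Finset ι).filter (fun i => v ∈ t i)).card ≤ k) :
    ∃ f : ι → V, Function.Injective f ∧ ∀ i, f i ∈ t i := by
  rw [← Finset.all_card_le_biUnion_card_iff_exists_injective]
  intro s
  have h1 : k * s.card ≤ ∑ i ∈ s, (t i).card := by
    rw [mul_comm, ← Finset.sum_const_nat fun i _ => rfl]
    exact Finset.sum_le_sum fun i _ => hlb i
  have h2 : ∑ i ∈ s, (t i).card ≤ k * (s.biUnion t).card := by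
    rw [myDoubleCount]
    calc ∑ v ∈ s.biUnion t, (s.filter (fun i => v ∈ t i)).card
        ≤ ∑ _v ∈ s.biUnion t, k := Finset.sum_le_sum fun v _ =>
          le_trans (Finset.card_le_card (Finset.filter_subset_filter _ (Finset.subset_univ s))) (hub v)
      _ = (s.biUnion t).card * k := Finset.sum_const_nat fun _ _ => rfl
      _ = k * (s.biUnion t).card := Nat.mul_comm _ _
  exact Nat.le_of_mul_le_mul_left (le_trans h1 h2) hk

lemma fin2aux : ∀ x : Fin 2, x ≠ 0 → x = 1 := by decide

lemma myMatching {V : Type*} [Fintype V] [DecidableEq V] (N : V → Finset V) (k : ℕ)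
    (hk : 0 < k) (hcard : ∀ v, (N v).card = k) (hsym : ∀ u v, u ∈ N v ↔ v ∈ N u)
    (χ : V → Fin 2) (hχ : ∀ v, ∀ u ∈ N v, χ u ≠ χ v) :
    ∃ m : V → V, (∀ v, m v ∈ N v) ∧ (∀ v, m (m v) = v) := by
  classical
  rcases isEmpty_or_nonempty V with hV | hV
  · exact ⟨id, fun v => (hV.false v).elim, fun v => (hV.false v).elim⟩
  -- the two sides
  set A : Finset V := univ.filter (fun v => χ v = 0) with hA
  set B : Finset V := univ.filter (fun v => χ v = 1) with hB
  have hNB : ∀ a, χ a = 0 → N a ⊆ B := by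
    intro a ha u hu
    simp only [hB, mem_filter, mem_univ, true_and]
    exact fin2aux _ (fun h0 => hχ a u hu (h0.trans ha.symm))
  have hNA : ∀ b, χ b = 1 → N b ⊆ A := by
    intro b hb u hu
    simp only [hA, mem_filter, mem_univ, true_and]
    by_contra h0
    exact hχ b u hu ((fin2aux _ h0).trans hb.symm)
  -- cardinality count |A| ≤ |B| and |B| ≤ |A|
  have count : ∀ (S T : Finset V), (∀ a ∈ S, N a ⊆ T) → S.card ≤ T.card := by
    intro S T hST
    have h1 : k * S.card = ∑ i ∈ S, (N i).card := by
      rw [mul_comm, ← Finset.sum_const_nat fun i _ => rfl]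
      exact (Finset.sum_congr rfl fun i _ => (hcard i).symm)
    have h2 : ∑ i ∈ S, (N i).card ≤ k * T.card := by
      rw [myDoubleCount]
      calc ∑ v ∈ S.biUnion N, (S.filter (fun i => v ∈ N i)).card
          ≤ ∑ v ∈ S.biUnion N, k := by
            refine Finset.sum_le_sum fun v _ => ?_
            calc (S.filter (fun i => v ∈ N i)).card ≤ (N v).card := by
                  refine Finset.card_le_card_of_injOn id ?_ (Set.injOn_id _)
                  intro a ha
                  simp only [Finset.mem_coe, mem_filter] at ha
                  exact (hsym v a).mp ha.2
              _ = k := hcard v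
        _ = (S.biUnion N).card * k := Finset.sum_const_nat fun _ _ => rfl
        _ ≤ k * T.card := by
            rw [Nat.mul_comm]
            refine Nat.mul_le_mul_left k (Finset.card_le_card ?_)
            intro v hv
            rw [Finset.mem_biUnion] at hv
            obtain ⟨a, haS, hav⟩ := hv
            exact hST a haS hav
    exact Nat.le_of_mul_le_mul_left (le_of_eq_of_le h1 h2) hk
  have hABcard : A.card = B.card := by
    refine le_antisymm (count A B ?_) (count B A ?_)
    · intro a ha; exact hNB a (by simpa [hA] using ha)
    · intro b hb; exact hNA b (by simpa [hB] using hb)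
  -- Hall on the subtype of A
  obtain ⟨f, finj, hf⟩ := myHall (ι := {a : V // χ a = 0}) (fun a => N a.1) k hk
    (fun a => le_of_eq (hcard a.1).symm)
    (by
      intro v
      calc _ ≤ (N v).card := by
              refine Finset.card_le_card_of_injOn (fun a => a.1) ?_ ?_
              · intro a ha
                simp only [Finset.mem_coe, mem_filter] at ha
                exact (hsym v a.1).mp ha.2
              · intro a _ b _ hab
                exact Subtype.ext hab
        _ = k := hcard v)
  -- image of f is exactly B
  have hfB : ∀ a, f a ∈ B := fun a => hNB a.1 a.2 (hf a)
  have hcardA : Fintype.card {a : V // χ a = 0} = A.card := by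
    simp [hA, Fintype.card_subtype]
  have himg : (univ : Finset {a : V // χ a = 0}).image f = B := by
    apply Finset.eq_of_subset_of_card_le
    · intro v hv
      rw [Finset.mem_image] at hv
      obtain ⟨a, _, rfl⟩ := hv
      exact hfB a
    · rw [Finset.card_image_of_injective _ finj, card_univ, hcardA, hABcard]
  have hrange : ∀ v, χ v = 1 → ∃ a, f a = v := by
    intro v hv
    have : v ∈ (univ : Finset {a : V // χ a = 0}).image f := by
      rw [himg]; simp [hB, hv]
    rw [Finset.mem_image] at this
    obtain ⟨a, _, ha⟩ := this
    exact ⟨a, ha⟩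
  have hne : Nonempty {a : V // χ a = 0} := by
    obtain ⟨v⟩ := hV
    by_cases h : χ v = 0
    · exact ⟨⟨v, h⟩⟩
    · obtain ⟨u, hu⟩ := Finset.card_pos.mp (by rw [hcard v]; exact hk)
      refine ⟨⟨u, ?_⟩⟩
      by_contra h0
      exact hχ v u hu (((fin2aux _ h0)).trans ((fin2aux _ h).symm))
  -- define m
  set g : V → {a : V // χ a = 0} := Function.invFun f with hg
  have hgf : ∀ a, g (f a) = a := fun a => Function.leftInverse_invFun finj a
  have hfg : ∀ v, χ v = 1 → f (g v) = v := fun v hv => Function.invFun_eq (hrange v hv)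
  refine ⟨fun v => if h : χ v = 0 then f ⟨v, h⟩ else (g v).1, ?_, ?_⟩
  · intro v
    by_cases h : χ v = 0
    · simpa [h] using hf ⟨v, h⟩
    · simp only [h, dif_neg, not_false_iff]
      have hv1 : χ v = 1 := fin2aux _ h
      have := hfg v hv1
      have hmem := hf (g v)
      rw [this] at hmem
      exact (hsym (g v).1 v).mpr hmem
  · intro v
    by_cases h : χ v = 0
    · simp only [h, dif_pos]
      have h1 : χ (f ⟨v, h⟩) = 1 := by
        have := hfB ⟨v, h⟩
        simpa [hB] using this
      have h1' : ¬ χ (f ⟨v, h⟩) = 0 := by rw [h1]; decide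
      simp only [h1', dif_neg, not_false_iff]
      rw [hgf ⟨v, h⟩]
    · have hv1 : χ v = 1 := fin2aux _ h
      simp only [h, dif_neg, not_false_iff]
      have h0 : χ (g v).1 = 0 := (g v).2
      simp only [h0, dif_pos]
      have : (⟨(g v).1, h0⟩ : {a : V // χ a = 0}) = g v := Subtype.ext rfl
      rw [this, hfg v hv1]

lemma myOrder {V : Type*} [Fintype V] [DecidableEq V] (ρ : Equiv.Perm V)
    (hfix : ∀ v, ρ v ≠ v) (b : V → V) (hb : ∀ v, ρ.SameCycle (b v) v)
    (hconst : ∀ v, b (ρ v) = b v) :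
    ∃ L : LinearOrder V, ∀ v, ρ v ≠ b v → Consec L v (ρ v) := by
  classical
  have hex : ∀ v, ∃ n : ℕ, (ρ ^ n) (b v) = v := by
    intro v
    obtain ⟨i, _, hi⟩ := (hb v).exists_pow_eq'
    exact ⟨i, hi⟩
  set steps : V → ℕ := fun v => Nat.find (hex v) with hstepsdef
  have hsteps : ∀ v, (ρ ^ steps v) (b v) = v := fun v => Nat.find_spec (hex v)
  have hmin : ∀ v n, n < steps v → (ρ ^ n) (b v) ≠ v := fun v n h => Nat.find_min (hex v) h
  have hsucc : ∀ v, ρ v ≠ b v → steps (ρ v) = steps v + 1 := by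
    intro v hv
    have hb' : b (ρ v) = b v := hconst v
    have h1 : (ρ ^ (steps v + 1)) (b (ρ v)) = ρ v := by
      rw [hb', pow_succ']
      simp only [Equiv.Perm.mul_apply]
      rw [hsteps v]
    have hle : steps (ρ v) ≤ steps v + 1 := Nat.find_le h1
    rcases Nat.lt_or_ge (steps (ρ v)) (steps v + 1) with hlt | hge
    · exfalso
      rcases Nat.eq_zero_or_pos (steps (ρ v)) with h0 | hpos
      · have := hsteps (ρ v)
        rw [h0, pow_zero, hb'] at this
        exact hv this.symm
      · obtain ⟨t, ht⟩ := Nat.exists_eq_add_of_lt hpos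
        have hspec := hsteps (ρ v)
        rw [ht, hb'] at hspec
        rw [show 0 + t + 1 = t + 1 by omega, pow_succ'] at hspec
        simp only [Equiv.Perm.mul_apply] at hspec
        have := ρ.injective hspec
        exact hmin v t (by omega) this
    · omega
  set e := Fintype.equivFin V with he
  set f : V → Lex (Fin (Fintype.card V) × ℕ) := fun v => toLex (e (b v), steps v) with hf
  have finj : Function.Injective f := by
    intro v w h
    have h' : (e (b v), steps v) = (e (b w), steps w) := h
    have hbvw : b v = b w := e.injective (congrArg Prod.fst h')
    have hsvw : steps v = steps w := congrArg Prod.snd h'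
    calc v = (ρ ^ steps v) (b v) := (hsteps v).symm
      _ = (ρ ^ steps w) (b w) := by rw [hbvw, hsvw]
      _ = w := hsteps w
  refine ⟨LinearOrder.lift' f finj, ?_⟩
  set L := LinearOrder.lift' f finj with hL
  have hlt : ∀ x y, L.lt x y ↔ f x < f y := fun _ _ => Iff.rfl
  intro v hv
  have hfρ : f (ρ v) = toLex (e (b v), steps v + 1) := by
    rw [hf]
    simp only [hconst v, hsucc v hv]
  have key : f v < f (ρ v) := by
    rw [hfρ]
    have fe : f v = toLex (e (b v), steps v) := rfl
    rw [fe, Prod.Lex.lt_iff]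
    right
    exact ⟨rfl, Nat.lt_succ_self _⟩
  refine ⟨Ne.symm (hfix v), ?_⟩
  intro w hw
  rcases hw with ⟨h1, h2⟩ | ⟨h1, h2⟩
  · rw [hlt] at h1 h2
    rw [hfρ] at h2
    have h1' : toLex (e (b v), steps v) < toLex (e (b w), steps w) := h1
    have h2' : toLex (e (b w), steps w) < toLex (e (b v), steps v + 1) := h2
    rw [Prod.Lex.lt_iff] at h1' h2'
    clear h1 h2
    rename' h1' => h1, h2' => h2
    simp only [ofLex_toLex] at h1 h2
    rcases h1 with h1 | ⟨h1, h1'⟩ <;> rcases h2 with h2 | ⟨h2, h2'⟩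
    · exact absurd (h1.trans h2) (lt_irrefl _)
    · rw [h2] at h1; exact absurd h1 (lt_irrefl _)
    · rw [h1] at h2; exact absurd h2 (lt_irrefl _)
    · omega
  · rw [hlt] at h1 h2
    exact absurd (key.trans (h1.trans h2)) (lt_irrefl _)


/-- For every 3-regular bipartite graph `G`, there are two linear orders on the
vertices such that the endpoints of every edge are consecutive in at least one
of the two orders. -/
theorem stmt0 {V : Type*} [Fintype V] (G : SimpleGraph V)
    (hreg : ∀ v : V, (G.neighborSet v).ncard = 3)
    (hbip : G.Colorable 2) :
    ∃ L1 L2 : LinearOrder V,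
      ∀ u v : V, G.Adj u v → Consec L1 u v ∨ Consec L2 u v := by
  classical
  obtain ⟨C⟩ := hbip
  set χ : V → Fin 2 := fun v => C v with hχdef
  letI : DecidableRel G.Adj := fun a b => Classical.dec _
  set N : V → Finset V := fun v => G.neighborFinset v with hNdef
  have hNcard : ∀ v, (N v).card = 3 := by
    intro v
    show (G.neighborFinset v).card = 3
    rw [SimpleGraph.neighborFinset_def, ← Set.ncard_eq_toFinset_card']
    exact hreg v
  have hNsym : ∀ u v, u ∈ N v ↔ v ∈ N u := by
    intro u v
    simp only [hNdef, SimpleGraph.mem_neighborFinset]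
    exact ⟨fun h => h.symm, fun h => h.symm⟩
  have hNχ : ∀ v, ∀ u ∈ N v, χ u ≠ χ v := by
    intro v u hu
    simp only [hNdef, SimpleGraph.mem_neighborFinset] at hu
    exact (C.valid hu).symm
  have f2a : ∀ x : Fin 2, x ≠ 0 → x = 1 := by decide
  have f2b : ∀ x : Fin 2, x ≠ 1 → x = 0 := by decide
  -- first matching
  obtain ⟨m1, hm1N, hm1inv⟩ := myMatching N 3 (by norm_num) hNcard hNsym χ hNχ
  -- second matching
  set N2 : V → Finset V := fun v => N v \ {m1 v} with hN2def
  have hN2card : ∀ v, (N2 v).card = 2 := by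
    intro v
    rw [hN2def]
    rw [Finset.card_sdiff_of_subset (Finset.singleton_subset_iff.mpr (hm1N v)), hNcard,
      Finset.card_singleton]
  have hN2sym : ∀ u v, u ∈ N2 v ↔ v ∈ N2 u := by
    intro u v
    simp only [hN2def, Finset.mem_sdiff, Finset.mem_singleton]
    constructor
    · rintro ⟨h1, h2⟩
      refine ⟨(hNsym u v).mp h1, fun h => h2 ?_⟩
      rw [h, hm1inv]
    · rintro ⟨h1, h2⟩
      refine ⟨(hNsym v u).mp h1, fun h => h2 ?_⟩
      rw [h, hm1inv]
  have hN2χ : ∀ v, ∀ u ∈ N2 v, χ u ≠ χ v := by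
    intro v u hu
    exact hNχ v u (Finset.mem_sdiff.mp hu).1
  obtain ⟨m2, hm2N2, hm2inv⟩ := myMatching N2 2 (by norm_num) hN2card hN2sym χ hN2χ
  have hm2N : ∀ v, m2 v ∈ N v := fun v => (Finset.mem_sdiff.mp (hm2N2 v)).1
  have hm21 : ∀ v, m2 v ≠ m1 v := fun v =>
    Finset.notMem_singleton.mp (Finset.mem_sdiff.mp (hm2N2 v)).2
  -- third matching
  set N3 : V → Finset V := fun v => N v \ {m1 v, m2 v} with hN3def
  have hN3card : ∀ v, (N3 v).card = 1 := by
    intro v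
    rw [hN3def]
    rw [Finset.card_sdiff_of_subset (by
      intro x hx
      rcases Finset.mem_insert.mp hx with h | h
      · rw [h]; exact hm1N v
      · rw [Finset.mem_singleton.mp h]; exact hm2N v), hNcard,
      Finset.card_pair (fun h => hm21 v h.symm)]
  have hex3 : ∀ v, ∃ a, N3 v = {a} := fun v => Finset.card_eq_one.mp (hN3card v)
  choose m3 hm3 using hex3
  have hm3mem : ∀ v, m3 v ∈ N3 v := fun v => (hm3 v) ▸ Finset.mem_singleton_self _
  have hm3N : ∀ v, m3 v ∈ N v := fun v => (Finset.mem_sdiff.mp (hm3mem v)).1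
  have hm31 : ∀ v, m3 v ≠ m1 v := by
    intro v h
    have := (Finset.mem_sdiff.mp (hm3mem v)).2
    exact this (Finset.mem_insert.mpr (Or.inl h))
  have hm32 : ∀ v, m3 v ≠ m2 v := by
    intro v h
    have := (Finset.mem_sdiff.mp (hm3mem v)).2
    exact this (Finset.mem_insert.mpr (Or.inr (Finset.mem_singleton.mpr h)))
  have hm3inv : ∀ v, m3 (m3 v) = v := by
    intro v
    have h1 : v ∈ N3 (m3 v) := by
      rw [hN3def]
      rw [Finset.mem_sdiff]
      refine ⟨(hNsym (m3 v) v).mp (hm3N v), ?_⟩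
      intro hmem
      rcases Finset.mem_insert.mp hmem with h | h
      · have := congrArg m1 h
        rw [hm1inv] at this
        exact hm31 v this.symm
      · have := congrArg m2 (Finset.mem_singleton.mp h)
        rw [hm2inv] at this
        exact hm32 v this.symm
    rw [hm3 (m3 v)] at h1
    exact (Finset.mem_singleton.mp h1).symm
  have hNdecomp : ∀ u v, u ∈ N v → u = m1 v ∨ u = m2 v ∨ u = m3 v := by
    intro u v hu
    by_cases h1 : u = m1 v
    · exact Or.inl h1
    by_cases h2 : u = m2 v
    · exact Or.inr (Or.inl h2)
    refine Or.inr (Or.inr ?_)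
    have : u ∈ N3 v := by
      rw [hN3def, Finset.mem_sdiff]
      refine ⟨hu, ?_⟩
      intro hmem
      rcases Finset.mem_insert.mp hmem with h | h
      · exact h1 h
      · exact h2 (Finset.mem_singleton.mp h)
    rw [hm3 v] at this
    exact Finset.mem_singleton.mp this
  have hc1 : ∀ v, χ (m1 v) ≠ χ v := fun v => hNχ v (m1 v) (hm1N v)
  have hc2 : ∀ v, χ (m2 v) ≠ χ v := fun v => hNχ v (m2 v) (hm2N v)
  have hc3 : ∀ v, χ (m3 v) ≠ χ v := fun v => hNχ v (m3 v) (hm3N v)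
  -- the two permutations
  set ρ12 : Equiv.Perm V :=
    ⟨fun v => if χ v = 0 then m1 v else m2 v, fun v => if χ v = 0 then m2 v else m1 v,
      mkPermAux χ m1 m2 hm1inv hm2inv hc1 hc2, mkPermAux χ m2 m1 hm2inv hm1inv hc2 hc1⟩
    with hρ12def
  set ρ13 : Equiv.Perm V :=
    ⟨fun v => if χ v = 0 then m1 v else m3 v, fun v => if χ v = 0 then m3 v else m1 v,
      mkPermAux χ m1 m3 hm1inv hm3inv hc1 hc3, mkPermAux χ m3 m1 hm3inv hm1inv hc3 hc1⟩
    with hρ13def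
  have hρ12 : ∀ v, ρ12 v = if χ v = 0 then m1 v else m2 v := fun v => rfl
  have hρ13 : ∀ v, ρ13 v = if χ v = 0 then m1 v else m3 v := fun v => rfl
  have hρ12N : ∀ v, ρ12 v ∈ N v := by
    intro v; rw [hρ12]; split
    · exact hm1N v
    · exact hm2N v
  have hρ13N : ∀ v, ρ13 v ∈ N v := by
    intro v; rw [hρ13]; split
    · exact hm1N v
    · exact hm3N v
  have hρ12c : ∀ v, χ (ρ12 v) ≠ χ v := fun v => hNχ v (ρ12 v) (hρ12N v)
  have hρ13c : ∀ v, χ (ρ13 v) ≠ χ v := fun v => hNχ v (ρ13 v) (hρ13N v)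
  have hρ12fix : ∀ v, ρ12 v ≠ v := fun v h => hρ12c v (by rw [h])
  have hρ13fix : ∀ v, ρ13 v ≠ v := fun v h => hρ13c v (by rw [h])
  have hρ12sq : ∀ v, ρ12 (ρ12 v) ≠ v := by
    intro v h
    rw [hρ12, hρ12] at h
    by_cases hv : χ v = 0
    · rw [if_pos hv] at h
      have h1 : ¬ χ (m1 v) = 0 := fun h0 => hc1 v (h0.trans hv.symm)
      rw [if_neg h1] at h
      have := congrArg m2 h
      rw [hm2inv] at this
      exact hm21 v this.symm
    · rw [if_neg hv] at h
      have h1 : χ (m2 v) = 0 := f2b _ (fun h0 => hc2 v (h0.trans (f2a _ hv).symm))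
      rw [if_pos h1] at h
      have := congrArg m1 h
      rw [hm1inv] at this
      exact hm21 v this
  have hρ13sq : ∀ v, ρ13 (ρ13 v) ≠ v := by
    intro v h
    rw [hρ13, hρ13] at h
    by_cases hv : χ v = 0
    · rw [if_pos hv] at h
      have h1 : ¬ χ (m1 v) = 0 := fun h0 => hc1 v (h0.trans hv.symm)
      rw [if_neg h1] at h
      have := congrArg m3 h
      rw [hm3inv] at this
      exact hm31 v this.symm
    · rw [if_neg hv] at h
      have h1 : χ (m3 v) = 0 := f2b _ (fun h0 => hc3 v (h0.trans (f2a _ hv).symm))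
      rw [if_pos h1] at h
      have := congrArg m1 h
      rw [hm1inv] at this
      exact hm31 v this
  -- setoids of cycles
  set s12 : Setoid V := ⟨ρ12.SameCycle,
    ⟨fun x => Equiv.Perm.SameCycle.refl _ _, fun h => h.symm, fun h h' => h.trans h'⟩⟩
    with hs12def
  set s13 : Setoid V := ⟨ρ13.SameCycle,
    ⟨fun x => Equiv.Perm.SameCycle.refl _ _, fun h => h.symm, fun h h' => h.trans h'⟩⟩
    with hs13def
  set tt : Quotient s12 ⊕ Quotient s13 → Finset V := fun i =>
    Sum.elim (fun q => univ.filter (fun v => χ v = 1 ∧ Quotient.mk s12 v = q))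
             (fun q => univ.filter (fun v => χ v = 1 ∧ Quotient.mk s13 v = q)) i
    with httdef
  have hlb : ∀ i, 2 ≤ (tt i).card := by
    intro i
    rcases i with q | q
    · obtain ⟨v, rfl⟩ := Quotient.exists_rep q
      obtain ⟨u, u', hne, hu1, hu'1, hsc, hsc'⟩ := orbitTwoEx χ ρ12 hρ12c hρ12sq v
      have hsub : ({u, u'} : Finset V) ⊆ tt (Sum.inl (Quotient.mk s12 v)) := by
        intro x hx
        rcases Finset.mem_insert.mp hx with h | h
        · subst h
          simp only [httdef, Sum.elim_inl, Finset.mem_filter, Finset.mem_univ, true_and]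
          exact ⟨hu1, Quotient.sound hsc.symm⟩
        · rw [Finset.mem_singleton.mp h]
          simp only [httdef, Sum.elim_inl, Finset.mem_filter, Finset.mem_univ, true_and]
          exact ⟨hu'1, Quotient.sound hsc'.symm⟩
      calc 2 = ({u, u'} : Finset V).card := (Finset.card_pair hne).symm
        _ ≤ _ := Finset.card_le_card hsub
    · obtain ⟨v, rfl⟩ := Quotient.exists_rep q
      obtain ⟨u, u', hne, hu1, hu'1, hsc, hsc'⟩ := orbitTwoEx χ ρ13 hρ13c hρ13sq v
      have hsub : ({u, u'} : Finset V) ⊆ tt (Sum.inr (Quotient.mk s13 v)) := by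
        intro x hx
        rcases Finset.mem_insert.mp hx with h | h
        · subst h
          simp only [httdef, Sum.elim_inr, Finset.mem_filter, Finset.mem_univ, true_and]
          exact ⟨hu1, Quotient.sound hsc.symm⟩
        · rw [Finset.mem_singleton.mp h]
          simp only [httdef, Sum.elim_inr, Finset.mem_filter, Finset.mem_univ, true_and]
          exact ⟨hu'1, Quotient.sound hsc'.symm⟩
      calc 2 = ({u, u'} : Finset V).card := (Finset.card_pair hne).symm
        _ ≤ _ := Finset.card_le_card hsub
  have hub : ∀ v : V, (univ.filter (fun i => v ∈ tt i)).card ≤ 2 := by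
    intro v
    have hsub : univ.filter (fun i => v ∈ tt i) ⊆
        {Sum.inl (Quotient.mk s12 v), Sum.inr (Quotient.mk s13 v)} := by
      intro i hi
      have hv := (Finset.mem_filter.mp hi).2
      rcases i with q | q
      · simp only [httdef, Sum.elim_inl, Finset.mem_filter] at hv
        rw [Finset.mem_insert]
        exact Or.inl (by rw [hv.2.2])
      · simp only [httdef, Sum.elim_inr, Finset.mem_filter] at hv
        rw [Finset.mem_insert, Finset.mem_singleton]
        exact Or.inr (by rw [hv.2.2])
    calc _ ≤ ({Sum.inl (Quotient.mk s12 v), Sum.inr (Quotient.mk s13 v)} :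
          Finset (Quotient s12 ⊕ Quotient s13)).card := Finset.card_le_card hsub
      _ ≤ 2 := by
        refine le_trans (Finset.card_insert_le _ _) ?_
        simp
  obtain ⟨r, rinj, hr⟩ := myHall tt 2 (by norm_num) hlb hub
  set b12 : V → V := fun v => r (Sum.inl (Quotient.mk s12 v)) with hb12def
  set b13 : V → V := fun v => r (Sum.inr (Quotient.mk s13 v)) with hb13def
  have hb12mem : ∀ v, χ (b12 v) = 1 ∧ Quotient.mk s12 (b12 v) = Quotient.mk s12 v := by
    intro v
    have := hr (Sum.inl (Quotient.mk s12 v))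
    simp only [httdef, Sum.elim_inl, Finset.mem_filter, Finset.mem_univ, true_and] at this
    exact this
  have hb13mem : ∀ v, χ (b13 v) = 1 ∧ Quotient.mk s13 (b13 v) = Quotient.mk s13 v := by
    intro v
    have := hr (Sum.inr (Quotient.mk s13 v))
    simp only [httdef, Sum.elim_inr, Finset.mem_filter, Finset.mem_univ, true_and] at this
    exact this
  have hb12sc : ∀ v, ρ12.SameCycle (b12 v) v := fun v => Quotient.exact (hb12mem v).2
  have hb13sc : ∀ v, ρ13.SameCycle (b13 v) v := fun v => Quotient.exact (hb13mem v).2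
  have hb12const : ∀ v, b12 (ρ12 v) = b12 v := by
    intro v
    have h : Quotient.mk s12 (ρ12 v) = Quotient.mk s12 v :=
      Quotient.sound (Equiv.Perm.SameCycle.symm (⟨1, by simp⟩ : ρ12.SameCycle v (ρ12 v)))
    rw [hb12def]
    simp only
    rw [h]
  have hb13const : ∀ v, b13 (ρ13 v) = b13 v := by
    intro v
    have h : Quotient.mk s13 (ρ13 v) = Quotient.mk s13 v :=
      Quotient.sound (Equiv.Perm.SameCycle.symm (⟨1, by simp⟩ : ρ13.SameCycle v (ρ13 v)))
    rw [hb13def]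
    simp only
    rw [h]
  obtain ⟨L1, cover1⟩ := myOrder ρ12 hρ12fix b12 hb12sc hb12const
  obtain ⟨L2, cover2⟩ := myOrder ρ13 hρ13fix b13 hb13sc hb13const
  -- coverage lemmas
  have main2 : ∀ x, χ x = 1 → Consec L1 x (m2 x) := by
    intro x hx
    have hx0 : ¬ χ x = 0 := by rw [hx]; decide
    have e12 : ρ12 x = m2 x := by rw [hρ12, if_neg hx0]
    have hne : ρ12 x ≠ b12 x := by
      rw [e12]
      intro h
      have h0 : χ (m2 x) = 0 := f2b _ (fun h0 => hc2 x (h0.trans hx.symm))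
      rw [h, (hb12mem x).1] at h0
      exact absurd h0 (by decide)
    have := cover1 x hne
    rwa [e12] at this
  have main3 : ∀ x, χ x = 1 → Consec L2 x (m3 x) := by
    intro x hx
    have hx0 : ¬ χ x = 0 := by rw [hx]; decide
    have e13 : ρ13 x = m3 x := by rw [hρ13, if_neg hx0]
    have hne : ρ13 x ≠ b13 x := by
      rw [e13]
      intro h
      have h0 : χ (m3 x) = 0 := f2b _ (fun h0 => hc3 x (h0.trans hx.symm))
      rw [h, (hb13mem x).1] at h0
      exact absurd h0 (by decide)
    have := cover2 x hne
    rwa [e13] at this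
  have main1 : ∀ x, χ x = 0 → Consec L1 x (m1 x) ∨ Consec L2 x (m1 x) := by
    intro x hx
    have e12 : ρ12 x = m1 x := by rw [hρ12, if_pos hx]
    have e13 : ρ13 x = m1 x := by rw [hρ13, if_pos hx]
    by_cases hbr : m1 x = b12 x
    · by_cases hbr2 : m1 x = b13 x
      · exfalso
        have key : (Sum.inl (Quotient.mk s12 x) : Quotient s12 ⊕ Quotient s13) =
            Sum.inr (Quotient.mk s13 x) := rinj (hbr.symm.trans hbr2)
        simp at key
      · right
        have hne : ρ13 x ≠ b13 x := by rw [e13]; exact hbr2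
        have := cover2 x hne
        rwa [e13] at this
    · left
      have hne : ρ12 x ≠ b12 x := by rw [e12]; exact hbr
      have := cover1 x hne
      rwa [e12] at this
  -- conclusion
  refine ⟨L1, L2, ?_⟩
  intro u v huv
  have hv : v ∈ N u := by
    rw [hNdef]
    simpa only [SimpleGraph.mem_neighborFinset] using huv
  rcases hNdecomp v u hv with h1 | h2 | h3
  · -- v = m1 u
    by_cases hcu : χ u = 0
    · rcases main1 u hcu with h | h
      · exact Or.inl (h1 ▸ h)
      · exact Or.inr (h1 ▸ h)
    · have hcu1 : χ u = 1 := f2a _ hcu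
      have hcv : χ v = 0 := by
        rw [h1]
        exact f2b _ (fun h0 => hc1 u (h0.trans hcu1.symm))
      have hmv : m1 v = u := by rw [h1, hm1inv]
      rcases main1 v hcv with h | h
      · exact Or.inl (consecSymm (hmv ▸ h))
      · exact Or.inr (consecSymm (hmv ▸ h))
  · -- v = m2 u
    by_cases hcu : χ u = 1
    · exact Or.inl (h2 ▸ main2 u hcu)
    · have hcu0 : χ u = 0 := f2b _ hcu
      have hcv : χ v = 1 := by
        rw [h2]
        exact f2a _ (fun h0 => hc2 u (h0.trans hcu0.symm))
      have hmv : m2 v = u := by rw [h2, hm2inv]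
      exact Or.inl (consecSymm (hmv ▸ main2 v hcv))
  · -- v = m3 u
    by_cases hcu : χ u = 1
    · exact Or.inr (h3 ▸ main3 u hcu)
    · have hcu0 : χ u = 0 := f2b _ hcu
      have hcv : χ v = 1 := by
        rw [h3]
        exact f2a _ (fun h0 => hc3 u (h0.trans hcu0.symm))
      have hmv : m3 v = u := by rw [h3, hm3inv]
      exact Or.inr (consecSymm (hmv ▸ main3 v hcv))
end

section
/- Let H be a graph that is a disjoint union of paths, let M be a perfect matching on the vertex set V(H) with M disjoint from the edge set of H, and let L be a cycle on a subset of V(H) whose edges are disjoint from both E(H) and M, such that every vertex of L has degree at most 1 in H. Then L contains an edge {u,w} such that u and w have degree at most 1 in H and u and w lie in different connected components of H. -/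
open SimpleGraph


/-- A graph is a disjoint union of paths iff it is acyclic and every vertex has
degree at most 2. -/
def IsPathForest {V : Type*} (H : SimpleGraph V) : Prop :=
  H.IsAcyclic ∧ ∀ v : V, (H.neighborSet v).ncard ≤ 2

/-- In a finite tree of max degree ≤ 2, at most two vertices have degree ≤ 1. -/
lemma aux_tree_few_low_degree {W : Type*} [Fintype W] (G : SimpleGraph W) [DecidableRel G.Adj]
    (hT : G.IsTree) (hdeg : ∀ v, G.degree v ≤ 2) (S : Finset W)
    (hS : ∀ v ∈ S, G.degree v ≤ 1) : S.card ≤ 2 := by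
  classical
  have he := hT.card_edgeFinset
  have hsum := G.sum_degrees_eq_twice_card_edges
  have h1 : ∑ v ∈ S, G.degree v ≤ S.card * 1 := Finset.sum_le_card_nsmul S _ 1 hS
  have h2 : ∑ v ∈ Sᶜ, G.degree v ≤ Sᶜ.card * 2 :=
    Finset.sum_le_card_nsmul Sᶜ _ 2 (fun v _ => hdeg v)
  have hsplit : ∑ v ∈ S, G.degree v + ∑ v ∈ Sᶜ, G.degree v = ∑ v, G.degree v :=
    Finset.sum_add_sum_compl S _
  have hcard : S.card + Sᶜ.card = Fintype.card W := Finset.card_add_card_compl S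
  -- from omega: any v in S has degree ≤ 1 contributes; derive S.card ≤ 2
  -- we also need the sums relation
  have hle : ∑ v, G.degree v ≤ S.card + Sᶜ.card * 2 := by omega
  omega

lemma aux_induce_acyclic {V : Type*} {H : SimpleGraph V} (hH : H.IsAcyclic) (s : Set V) :
    (H.induce s).IsAcyclic := by
  intro v p hp
  exact hH ((p.map (SimpleGraph.Embedding.induce s).toHom)) (hp.map Subtype.val_injective)

/-- If `H` is a disjoint union of paths, `M` is a perfect matching edge-disjoint
from `H`, and `L` is a cycle (a connected 2-regular graph on at least 3 vertices)
whose edges are disjoint from both `H` and `M` and all of whose vertices have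
degree at most 1 in `H`, then `L` has an edge `{u, w}` whose endpoints have degree
at most 1 in `H` and lie in different connected components of `H`. -/
theorem stmt3 {V : Type*} [Fintype V] (H M L : SimpleGraph V)
    (hH : IsPathForest H)
    (hM : ∀ v : V, ∃! w : V, M.Adj v w)
    (hMH : Disjoint M H)
    (hLH : Disjoint L H) (hLM : Disjoint L M)
    (hLdeg : ∀ v ∈ L.support, (L.neighborSet v).ncard = 2)
    (hLconn : (SimpleGraph.induce L.support L).Connected)
    (hLcard : 3 ≤ L.support.ncard)
    (hdegH : ∀ v ∈ L.support, (H.neighborSet v).ncard ≤ 1) :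
    ∃ u w : V, L.Adj u w ∧
      (H.neighborSet u).ncard ≤ 1 ∧ (H.neighborSet w).ncard ≤ 1 ∧
      H.connectedComponentMk u ≠ H.connectedComponentMk w := by
    classical
  by_contra hcon
  push_neg at hcon
  have hcc : ∀ u w : V, L.Adj u w → H.connectedComponentMk u = H.connectedComponentMk w := by
    intro u w huw
    exact hcon u w huw (hdegH u ⟨w, huw⟩) (hdegH w ⟨u, huw.symm⟩)
  obtain ⟨v₀, hv₀⟩ : L.support.Nonempty := by
    rw [← Set.ncard_pos (Set.toFinite _)]; omega
  have key : ∀ (a b : ↥L.support) (p : (SimpleGraph.induce L.support L).Walk a b),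
      H.connectedComponentMk a.val = H.connectedComponentMk b.val := by
    intro a b p
    induction p with
    | nil => rfl
    | cons h _ ih => exact (hcc _ _ h).trans ih
  set C := H.connectedComponentMk v₀ with hC
  have hsub : L.support ⊆ C.supp := by
    intro v hv
    obtain ⟨p⟩ := hLconn.preconnected ⟨v, hv⟩ ⟨v₀, hv₀⟩
    rw [ConnectedComponent.mem_supp_iff]
    exact key _ _ p
  -- the induced graph on the component is connected
  have hCconn : (H.induce C.supp).Connected := by
    have walkind : ∀ (a b : V) (p : H.Walk a b) (ha : a ∈ C.supp),
        ∃ hb : b ∈ C.supp, (H.induce C.supp).Reachable ⟨a, ha⟩ ⟨b, hb⟩ := by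
      intro a b p
      induction p with
      | nil => exact fun ha => ⟨ha, Reachable.refl _⟩
      | @cons u x w h q ih =>
        intro ha
        have hx : x ∈ C.supp := by
          rw [ConnectedComponent.mem_supp_iff] at ha ⊢
          rw [← ha]
          exact (ConnectedComponent.connectedComponentMk_eq_of_adj h).symm
        obtain ⟨hb, hr⟩ := ih hx
        exact ⟨hb, Reachable.trans (Adj.reachable (by exact h :
          (H.induce C.supp).Adj ⟨u, ha⟩ ⟨x, hx⟩)) hr⟩
    have hne : Nonempty ↥C.supp := ⟨⟨v₀, hsub hv₀⟩⟩
    refine Connected.mk ?_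
    rintro ⟨a, ha⟩ ⟨b, hb⟩
    have hr : H.Reachable a b := by
      rw [ConnectedComponent.mem_supp_iff] at ha hb
      exact ConnectedComponent.exact (ha.trans hb.symm)
    obtain ⟨p⟩ := hr
    obtain ⟨hb', hr⟩ := walkind a b p ha
    exact hr
  have hTree : (H.induce C.supp).IsTree := ⟨hCconn, aux_induce_acyclic hH.1 C.supp⟩
  haveI : Fintype ↥C.supp := Fintype.ofFinite _
  -- degrees in the induced graph agree with ncard of H-neighborSets
  have hdegeq : ∀ x : ↥C.supp, (H.induce C.supp).degree x = (H.neighborSet x.val).ncard := by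
    intro x
    have h0 : ((H.induce C.supp).neighborSet x).ncard = (H.induce C.supp).degree x := by
      rw [← SimpleGraph.card_neighborSet_eq_degree, ← Nat.card_coe_set_eq,
        Nat.card_eq_fintype_card]
    have himg : Subtype.val '' ((H.induce C.supp).neighborSet x) = H.neighborSet x.val := by
      ext y
      simp only [Set.mem_image, SimpleGraph.mem_neighborSet]
      constructor
      · rintro ⟨z, hz, rfl⟩; exact hz
      · intro hy
        have hys : y ∈ C.supp := by
          rw [ConnectedComponent.mem_supp_iff, ← (x.2 : H.connectedComponentMk x.val = C)]
          exact (ConnectedComponent.connectedComponentMk_eq_of_adj hy).symm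
        exact ⟨⟨y, hys⟩, hy, rfl⟩
    rw [← h0, ← himg, Set.ncard_image_of_injective _ Subtype.val_injective]
  -- apply the counting lemma
  set S : Finset ↥C.supp := Finset.univ.filter (fun x => x.val ∈ L.support) with hS
  have hScard : S.card ≤ 2 := by
    refine aux_tree_few_low_degree _ hTree (fun v => ?_) S (fun v hv => ?_)
    · rw [hdegeq]; exact hH.2 v.val
    · rw [hdegeq]; exact hdegH v.val (by simpa [hS] using hv)
  have h3 : L.support.ncard ≤ S.card := by
    haveI : Fintype ↥L.support := Fintype.ofFinite _
    rw [Set.ncard_eq_toFinset_card' L.support]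
    refine Finset.card_le_card_of_injOn
      (fun v => if h : v ∈ L.support then (⟨v, hsub h⟩ : ↥C.supp) else ⟨v₀, hsub hv₀⟩)
      (fun a ha => ?_) (fun a ha b hb hab => ?_)
    · rw [Finset.mem_coe, Set.mem_toFinset] at ha
      simp [hS, ha]
    · simp only [Finset.mem_coe, Set.mem_toFinset] at ha hb
      simp only [ha, hb, dif_pos] at hab
      simpa using congrArg Subtype.val hab
  omega
end

section
/- Let ◁ be a linear order on a finite candidate set C, and let S ⊆ C be a set of candidates that are consecutive in ◁ (i.e., S is an interval of ◁). Then there exists a linear order π on C such that every candidate in S is ranked above every candidate not in S, and π is single-peaked with respect to ◁. -/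
/-- A vote `v` is single-peaked with respect to an axis `ax` (both strict linear
orders, where `lt x y` means `x` is ranked above / preferred to `y` in a vote):
for all `a ◁ b ◁ c` or `c ◁ b ◁ a`, ranking `c` above `b` implies ranking `b` above `a`. -/
def SinglePeaked {C : Type*} (ax v : LinearOrder C) : Prop :=
  ∀ a b c : C, ((ax.lt a b ∧ ax.lt b c) ∨ (ax.lt c b ∧ ax.lt b a)) →
    v.lt c b → v.lt b a

/-- `S` is an interval (set of consecutive candidates) of the axis `ax`. -/
def IsInterval {C : Type*} (ax : LinearOrder C) (S : Set C) : Prop :=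
  ∀ x ∈ S, ∀ z ∈ S, ∀ y : C, ax.lt x y → ax.lt y z → y ∈ S

/-- If `S` is an interval of the axis `◁`, then there is a linear order `π` on
`C` ranking every candidate of `S` above every candidate outside `S` that is
single-peaked with respect to `◁`. -/
theorem stmt5 {C : Type*} [Fintype C] (ax : LinearOrder C) (S : Set C)
    (hS : IsInterval ax S) :
    ∃ π : LinearOrder C,
      (∀ s ∈ S, ∀ c ∉ S, π.lt s c) ∧ SinglePeaked ax π := by
  classical
  letI := ax
  rcases S.eq_empty_or_nonempty with rfl | ⟨s₀, hs₀⟩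
  · refine ⟨ax, by simp, ?_⟩
    rintro a b c (⟨h1, h2⟩ | ⟨h1, h2⟩) hcb
    · exact absurd hcb (lt_asymm h2)
    · exact h2
  · have hax : ∀ x y : C, ax.lt x y ↔ x < y := fun _ _ => Iff.rfl
    -- rank function
    set h : C → ℤ := fun x => ((Finset.univ.filter (fun z => z < x)).card : ℤ) with hh
    have hmono : ∀ x y : C, x < y → h x < h y := by
      intro x y hxy
      have hsub : Finset.univ.filter (fun z => z < x) ⊂ Finset.univ.filter (fun z => z < y) := by
        refine ⟨fun z hz => ?_, fun hc => ?_⟩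
        · simp only [Finset.mem_filter, Finset.mem_univ, true_and] at *
          exact hz.trans hxy
        · have := hc (Finset.mem_filter.mpr ⟨Finset.mem_univ x, hxy⟩)
          simp at this
      simp only [hh]
      exact_mod_cast Finset.card_lt_card hsub
    have hiff : ∀ x y : C, h x < h y ↔ x < y := by
      intro x y
      refine ⟨fun hxy => ?_, hmono x y⟩
      rcases lt_trichotomy x y with h' | h' | h'
      · exact h'
      · exact absurd hxy (by simp [h'])
      · exact absurd hxy (not_lt.mpr (le_of_lt (hmono _ _ h')))
    have hinj : Function.Injective h := by
      intro x y hxy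
      rcases lt_trichotomy x y with h' | h' | h'
      · exact absurd ((hiff x y).mpr h') (by simp [hxy])
      · exact h'
      · exact absurd ((hiff y x).mpr h') (by simp [hxy])
    set blk : C → ℤ := fun x => if x ∈ S then 0 else if x < s₀ then 1 else 2 with hblk
    set g : C → ℤ ×ₗ ℤ := fun x => toLex (blk x, if blk x = 1 then -h x else h x) with hg
    have hginj : Function.Injective g := by
      intro x y hxy
      have hp : (blk x, if blk x = 1 then -h x else h x)
          = (blk y, if blk y = 1 then -h y else h y) := toLex_inj.mp hxy
      have h1 : blk x = blk y := congrArg Prod.fst hp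
      have h2 : (if blk x = 1 then -h x else h x) = (if blk y = 1 then -h y else h y) :=
        congrArg Prod.snd hp
      rw [h1] at h2
      by_cases hb : blk y = 1
      · simp only [hb, if_pos] at h2
        exact hinj (neg_injective h2)
      · simp only [hb, if_neg, if_false] at h2
        exact hinj h2
    have hlt : ∀ x y : C, (LinearOrder.lift' g hginj).lt x y ↔ g x < g y :=
      fun x y => Iff.rfl
    have hblkS : ∀ x ∈ S, blk x = 0 := fun x hx => by simp [hblk, hx]
    have hblkpos : ∀ x, x ∉ S → 0 < blk x := by
      intro x hx
      simp only [hblk, hx, if_false]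
      split <;> norm_num
    have hL : ∀ x, x ∉ S → x < s₀ → ∀ s ∈ S, x < s := by
      intro x hx hxs s hs
      rcases lt_trichotomy x s with h' | h' | h'
      · exact h'
      · exact absurd (h' ▸ hs) hx
      · exact absurd (hS s hs s₀ hs₀ x h' hxs) hx
    have hR : ∀ x, x ∉ S → ¬ x < s₀ → ∀ s ∈ S, s < x := by
      intro x hx hxs s hs
      have hs₀x : s₀ < x := by
        rcases lt_trichotomy x s₀ with h' | h' | h'
        · exact absurd h' hxs
        · exact absurd (h' ▸ hs₀) hx
        · exact h'
      rcases lt_trichotomy s x with h' | h' | h'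
      · exact h'
      · exact absurd (h' ▸ hs) hx
      · exact absurd (hS s₀ hs₀ s hs x hs₀x h') hx
    refine ⟨LinearOrder.lift' g hginj, ?_, ?_⟩
    · -- S above complement
      intro s hs c hc
      rw [hlt, hg]
      exact Prod.Lex.lt_iff.mpr (Or.inl (by show blk s < blk c; rw [hblkS s hs]; exact hblkpos c hc))
    · -- single-peaked
      intro a b c hcase hcb
      rw [hlt, hg, Prod.Lex.lt_iff] at hcb ⊢
      dsimp only [ofLex_toLex] at hcb ⊢
      rcases hcase with ⟨hab, hbc⟩ | ⟨hcb', hba⟩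
      · rw [hax] at hab hbc
        by_cases hbS : b ∈ S
        · -- impossible: g c < g b with b ∈ S, b < c
          exfalso
          by_cases hcS : c ∈ S
          · rcases hcb with hlt1 | ⟨_, hlt2⟩
            · rw [hblkS b hbS, hblkS c hcS] at hlt1; exact lt_irrefl _ hlt1
            · simp only [hblkS b hbS, hblkS c hcS] at hlt2
              norm_num at hlt2
              exact absurd ((hiff c b).mp hlt2) (not_lt.mpr (le_of_lt hbc))
          · rcases hcb with hlt1 | ⟨heq, _⟩
            · rw [hblkS b hbS] at hlt1
              exact absurd hlt1 (not_lt.mpr (le_of_lt (hblkpos c hcS)))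
            · rw [hblkS b hbS] at heq
              exact absurd heq (hblkpos c hcS).ne'
        · by_cases hbs₀ : b < s₀
          · -- b in L; a also in L; conclusion holds directly
            have hbL : blk b = 1 := by simp [hblk, hbS, hbs₀]
            have haS : a ∉ S := fun haS => absurd hab (not_lt.mpr (le_of_lt (hL b hbS hbs₀ a haS)))
            have has₀ : a < s₀ := hab.trans hbs₀
            have haL : blk a = 1 := by simp [hblk, haS, has₀]
            refine Or.inr ⟨by rw [hbL, haL], ?_⟩
            simp only [hbL, haL, if_pos]
            exact neg_lt_neg ((hiff a b).mpr hab)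
          · -- b in R; c also in R; hypothesis contradictory
            exfalso
            have hbR : blk b = 2 := by simp [hblk, hbS, hbs₀]
            have hcS : c ∉ S := fun hcS => absurd hbc (not_lt.mpr (le_of_lt (hR b hbS hbs₀ c hcS)))
            have hcs₀ : ¬ c < s₀ := fun hcs₀ =>
              hbs₀ (hbc.trans hcs₀)
            have hcR : blk c = 2 := by simp [hblk, hcS, hcs₀]
            rcases hcb with hlt1 | ⟨_, hlt2⟩
            · rw [hbR, hcR] at hlt1; exact lt_irrefl _ hlt1
            · simp only [hbR, hcR] at hlt2
              norm_num at hlt2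
              exact absurd ((hiff c b).mp hlt2) (not_lt.mpr (le_of_lt hbc))
      · rw [hax] at hcb' hba
        by_cases hbS : b ∈ S
        · -- b ∈ S: conclusion g b < g a holds
          by_cases haS : a ∈ S
          · refine Or.inr ⟨by rw [hblkS b hbS, hblkS a haS], ?_⟩
            simp only [hblkS b hbS, hblkS a haS]
            norm_num
            exact (hiff b a).mpr hba
          · exact Or.inl (by rw [hblkS b hbS]; exact hblkpos a haS)
        · by_cases hbs₀ : b < s₀
          · -- b in L; c in L; hypothesis contradictory
            exfalso
            have hbL : blk b = 1 := by simp [hblk, hbS, hbs₀]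
            have hcS : c ∉ S := fun hcS => absurd hcb' (not_lt.mpr (le_of_lt (hL b hbS hbs₀ c hcS)))
            have hcs₀ : c < s₀ := hcb'.trans hbs₀
            have hcL : blk c = 1 := by simp [hblk, hcS, hcs₀]
            rcases hcb with hlt1 | ⟨_, hlt2⟩
            · rw [hbL, hcL] at hlt1; exact lt_irrefl _ hlt1
            · simp only [hbL, hcL, if_pos] at hlt2
              have := neg_lt_neg_iff.mp hlt2
              exact absurd ((hiff b c).mp this) (not_lt.mpr (le_of_lt hcb'))
          · -- b in R; a in R; conclusion direct
            have hbR : blk b = 2 := by simp [hblk, hbS, hbs₀]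
            have haS : a ∉ S := fun haS =>
              absurd hba (not_lt.mpr (le_of_lt (hR b hbS hbs₀ a haS)))
            have has₀ : ¬ a < s₀ := fun has₀ => hbs₀ (hba.trans has₀)
            have haR : blk a = 2 := by simp [hblk, haS, has₀]
            refine Or.inr ⟨by rw [hbR, haR], ?_⟩
            simp only [hbR, haR]
            norm_num
            exact (hiff b a).mpr hba
end

section
/- If an election (C, Π) is single-peaked with respect to some axis, then it contains no worst-diverse structure: there do not exist votes πx, πy, πz ∈ Π and candidates a, b, c ∈ C with πx ranking a below both b and c, πy ranking b below both a and c, and πz ranking c below both a and b. -/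
private lemma no_mid {C : Type*} (ax v : LinearOrder C) (h : SinglePeaked ax v) (x m y : C)
    (hc : (ax.lt x m ∧ ax.lt m y) ∨ (ax.lt y m ∧ ax.lt m x))
    (hx : v.lt x m) (hy : v.lt y m) : False :=
  @lt_asymm C v.toPartialOrder.toPreorder x m hx (h x m y hc hy)

/-- A single-peaked election contains no worst-diverse structure. -/
theorem stmt10 {C : Type*} (E : Multiset (LinearOrder C))
    (hsp : ∃ ax : LinearOrder C, ∀ v ∈ E, SinglePeaked ax v) :
    ¬ ∃ πx ∈ E, ∃ πy ∈ E, ∃ πz ∈ E, ∃ a b c : C,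
        πx.lt b a ∧ πx.lt c a ∧ πy.lt a b ∧ πy.lt c b ∧ πz.lt a c ∧ πz.lt b c := by
  rintro ⟨πx, hxE, πy, hyE, πz, hzE, a, b, c, hba, hca, hab, hcb, hac, hbc⟩
  obtain ⟨ax, hax⟩ := hsp
  have Hx := hax πx hxE
  have Hy := hax πy hyE
  have Hz := hax πz hzE
  rcases @lt_trichotomy C ax a b with h1 | h1 | h1
  · rcases @lt_trichotomy C ax b c with h2 | h2 | h2
    · exact no_mid ax πy Hy a b c (Or.inl ⟨h1, h2⟩) hab hcb
    · subst h2
      exact @lt_irrefl C πy.toPartialOrder.toPreorder b hcb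
    · rcases @lt_trichotomy C ax a c with h3 | h3 | h3
      · -- a < c < b : middle c
        exact no_mid ax πz Hz a c b (Or.inl ⟨h3, h2⟩) hac hbc
      · subst h3
        exact @lt_irrefl C πz.toPartialOrder.toPreorder a hac
      · -- c < a < b : middle a
        exact no_mid ax πx Hx c a b (Or.inl ⟨h3, h1⟩) hca hba
  · subst h1
    exact @lt_irrefl C πy.toPartialOrder.toPreorder a hab
  · -- b < a
    rcases @lt_trichotomy C ax a c with h2 | h2 | h2
    · -- b < a < c : middle a
      exact no_mid ax πx Hx b a c (Or.inl ⟨h1, h2⟩) hba hca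
    · subst h2
      exact @lt_irrefl C πz.toPartialOrder.toPreorder a hac
    · rcases @lt_trichotomy C ax b c with h3 | h3 | h3
      · -- b < c < a : middle c
        exact no_mid ax πz Hz b c a (Or.inl ⟨h3, h2⟩) hbc hac
      · subst h3
        exact @lt_irrefl C πz.toPartialOrder.toPreorder b hbc
      · -- c < b < a : middle b
        exact no_mid ax πy Hy c b a (Or.inl ⟨h3, h1⟩) hcb hab
end

section
/- If an election (C, Π) is single-peaked with respect to some axis, then it contains no α-structure: there do not exist votes πx, πy ∈ Π and candidates a, b, c, d ∈ C such that πx ranks a above b, b above c, and d above b, while πy ranks c above b, b above a, and d above b. -/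
/-- A single-peaked election contains no α-structure. -/
theorem stmt11 {C : Type*} (E : Multiset (LinearOrder C))
    (hsp : ∃ ax : LinearOrder C, ∀ v ∈ E, SinglePeaked ax v) :
    ¬ ∃ πx ∈ E, ∃ πy ∈ E, ∃ a b c d : C,
        πx.lt a b ∧ πx.lt b c ∧ πx.lt d b ∧
        πy.lt c b ∧ πy.lt b a ∧ πy.lt d b := by
  rintro ⟨πx, hx, πy, hy, a, b, c, d, hab, hbc, hdb, hcb, hba, hdb'⟩
  obtain ⟨ax, hax⟩ := hsp
  have Sx := hax πx hx
  have Sy := hax πy hy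
  have hac : πx.lt a c := @lt_trans C πx.toPreorder _ _ _ hab hbc
  have hca : πy.lt c a := @lt_trans C πy.toPreorder _ _ _ hcb hba
  rcases @lt_trichotomy C ax b d with hbd | rfl | hdb2
  · rcases @lt_trichotomy C ax a b with hab2 | rfl | hba2
    · exact @lt_asymm C πx.toPreorder _ _ hab (Sx a b d (Or.inl ⟨hab2, hbd⟩) hdb)
    · exact @lt_irrefl C πx.toPreorder a hab
    · rcases @lt_trichotomy C ax c b with hcb2 | rfl | hbc2
      · exact @lt_asymm C πy.toPreorder _ _ hcb (Sy c b d (Or.inl ⟨hcb2, hbd⟩) hdb')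
      · exact @lt_irrefl C πy.toPreorder c hcb
      · rcases @lt_trichotomy C ax a c with hac2 | rfl | hca2
        · exact @lt_asymm C πy.toPreorder _ _ hba (Sy b a c (Or.inl ⟨hba2, hac2⟩) hca)
        · exact @lt_irrefl C πx.toPreorder a hac
        · exact @lt_asymm C πx.toPreorder _ _ hbc (Sx b c a (Or.inl ⟨hbc2, hca2⟩) hac)
  · exact @lt_irrefl C πx.toPreorder b hdb
  · rcases @lt_trichotomy C ax b a with hba2 | rfl | hab2
    · exact @lt_asymm C πx.toPreorder _ _ hab (Sx a b d (Or.inr ⟨hdb2, hba2⟩) hdb)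
    · exact @lt_irrefl C πx.toPreorder b hab
    · rcases @lt_trichotomy C ax b c with hbc2 | rfl | hcb2
      · exact @lt_asymm C πy.toPreorder _ _ hcb (Sy c b d (Or.inr ⟨hdb2, hbc2⟩) hdb')
      · exact @lt_irrefl C πx.toPreorder b hbc
      · rcases @lt_trichotomy C ax a c with hac2 | rfl | hca2
        · exact @lt_asymm C πx.toPreorder _ _ hac (Sx a c b (Or.inl ⟨hac2, hcb2⟩) hbc)
        · exact @lt_irrefl C πx.toPreorder a hac
        · exact @lt_asymm C πy.toPreorder _ _ hca (Sy c a b (Or.inl ⟨hca2, hab2⟩) hba)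
end

section
/- Let π and π' be two linear orders on C that are both single-peaked with respect to the same axis ◁, and suppose the set of candidates π ranks above p is a subset of the set of candidates π' ranks above p, where in both votes all candidates ranked above p lie on the same side of p in ◁. Then: if every candidate ranked above p in π' also lies on the left of p in ◁ (respectively right), the set Ab(π,p) is an initial (respectively final) interval of Ab(π',p) with respect to ◁ restricted to that side. -/
/-- Let `π, π'` be single-peaked w.r.t. the axis `ax`, with the candidates ranked
above `p` in `π` a subset of those ranked above `p` in `π'`, and in both votes all
candidates above `p` on the same side of `p` in the axis.  If that side is the left
(resp. right), then `Ab(π,p)` is the segment of `Ab(π',p)` closest to `p`: any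
candidate of `Ab(π',p)` lying between a member of `Ab(π,p)` and `p` on the axis is
also in `Ab(π,p)`. -/
theorem stmt12 {C : Type*} [Fintype C] (ax π π' : LinearOrder C) (p : C)
    (h1 : SinglePeaked ax π) (h2 : SinglePeaked ax π')
    (hsub : ∀ c : C, π.lt c p → π'.lt c p)
    (hside : (∀ c : C, π'.lt c p → ax.lt c p) ∨ (∀ c : C, π'.lt c p → ax.lt p c)) :
    ((∀ c : C, π'.lt c p → ax.lt c p) →
      ∀ x y : C, π.lt x p → π'.lt y p → ax.lt x y → π.lt y p) ∧
    ((∀ c : C, π'.lt c p → ax.lt p c) →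
      ∀ x y : C, π.lt x p → π'.lt y p → ax.lt y x → π.lt y p) := by
  constructor
  · intro hl x y hxp hyp' hxy
    have hyp : ax.lt y p := hl y hyp'
    rcases @lt_trichotomy C π y p with h | h | h
    · exact h
    · exact absurd h (@ne_of_lt C π'.toPreorder y p hyp')
    · -- π.lt p y, so π.lt x y by transitivity
      have hxy' : π.lt x y := @lt_trans C π.toPreorder x p y hxp h
      exact h1 p y x (Or.inr ⟨hxy, hyp⟩) hxy'
  · intro hr x y hxp hyp' hyx
    have hyp : ax.lt p y := hr y hyp'
    rcases @lt_trichotomy C π y p with h | h | h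
    · exact h
    · exact absurd h (@ne_of_lt C π'.toPreorder y p hyp')
    · have hxy' : π.lt x y := @lt_trans C π.toPreorder x p y hxp h
      exact h1 p y x (Or.inl ⟨hyp, hyx⟩) hxy'
end

section
/- Consider a finite multiset Π of linear orders on C all single-peaked with respect to a common axis ◁, and a fixed candidate p, such that for every vote in Π all candidates ranked above p lie to the left of p in ◁. Order the votes as π_1, ..., π_t so that the rank of p is non-increasing, i.e., π_x(p) ≥ π_{x+1}(p) for all x. Then for every x, the set of candidates ranked above p in π_{x+1} is a subset of the set of candidates ranked above p in π_x. -/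
/-- The rank (position) of `c` in the vote `v`: 1 plus the number of candidates
ranked above `c`. -/
noncomputable def rank {C : Type*} (v : LinearOrder C) (c : C) : ℕ :=
  1 + {c' : C | v.lt c' c}.ncard

/-- For a sequence of votes single-peaked w.r.t. a common axis, all of whose
above-`p` candidates lie to the left of `p` on the axis, ordered so that the rank
of `p` is non-increasing, the above-`p` set of each vote contains that of the next. -/
theorem stmt13 {C : Type*} [Fintype C] (ax : LinearOrder C) (p : C) (t : ℕ)
    (π : Fin (t + 1) → LinearOrder C)
    (hsp : ∀ i, SinglePeaked ax (π i))
    (hleft : ∀ i, ∀ c : C, (π i).lt c p → ax.lt c p)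
    (hmono : ∀ i : Fin t, rank (π i.succ) p ≤ rank (π i.castSucc) p) :
    ∀ i : Fin t, ∀ c : C, (π i.succ).lt c p → (π i.castSucc).lt c p := by
  -- upward closure of the above-p set along the axis, below p
  have closure : ∀ (j : Fin (t+1)) (a b : C), (π j).lt a p → ax.lt a b → ax.lt b p →
      (π j).lt b p := by
    intro j a b ha hab hbp
    by_contra h
    have hbne : b ≠ p := @ne_of_lt C ax.toPreorder _ _ hbp
    have hpb : (π j).lt p b := by
      rcases @lt_trichotomy C (π j) b p with h1 | h1 | h1
      · exact absurd h1 h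
      · exact absurd h1 hbne
      · exact h1
    have hba : (π j).lt b a := hsp j a b p (Or.inl ⟨hab, hbp⟩) hpb
    exact h (@lt_trans C (π j).toPreorder _ _ _ hba ha)
  intro i c hc
  by_contra hcn
  set S : Set C := {c' | (π i.succ).lt c' p} with hS
  set T : Set C := {c' | (π i.castSucc).lt c' p} with hT
  have hcS : c ∈ S := hc
  have hcT : c ∉ T := hcn
  have hST : S.ncard ≤ T.ncard := Nat.le_of_add_le_add_left (hmono i)
  have hsub : T ⊆ S \ {c} := by
    intro d hd
    have hdp : ax.lt d p := hleft _ d hd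
    rcases @lt_trichotomy C ax c d with h1 | h1 | h1
    · exact ⟨closure _ c d hc h1 hdp, fun he => @ne_of_lt C ax.toPreorder _ _ h1 (Set.mem_singleton_iff.mp he).symm⟩
    · exact absurd (h1 ▸ hd) hcT
    · exact absurd (closure _ d c hd h1 (hleft _ c hc)) hcT
  have h1 : T.ncard ≤ (S \ {c}).ncard := Set.ncard_le_ncard hsub (Set.toFinite _)
  have h2 : (S \ {c}).ncard < S.ncard := Set.ncard_diff_singleton_lt_of_mem hcS (Set.toFinite _)
  omega
end

section
/- Let (C, Π) be an election and p ∈ C. If there exists a subset of at most ℓ votes whose deletion makes p the Condorcet winner, then there exists such a subset in which no vote ranks p first. -/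
/-- `prefCount E c c'` is the number of votes in `E` preferring `c` to `c'`. -/
def prefCount {C : Type*} (E : Multiset (LinearOrder C)) (c c' : C) : ℕ :=
  letI : DecidablePred (fun v : LinearOrder C => v.lt c c') :=
    fun v => v.toDecidableLT c c'
  E.countP (fun v => v.lt c c')

/-- `p` is the Condorcet winner of the election `E`. -/
def CondorcetWinner {C : Type*} (E : Multiset (LinearOrder C)) (p : C) : Prop :=
  ∀ c : C, c ≠ p → prefCount E c p < prefCount E p c

lemma prefCount_add {C : Type*} (A B : Multiset (LinearOrder C)) (c c' : C) :
    prefCount (A + B) c c' = prefCount A c c' + prefCount B c c' := by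
  simp [prefCount, Multiset.countP_add]

/-- If at most `ℓ` votes can be deleted from `E` so that `p` becomes the Condorcet
winner (`E = S + R`, deleting `S` and keeping `R`), then this can also be done
deleting no vote that ranks `p` first. -/
theorem stmt17 {C : Type*} (E : Multiset (LinearOrder C)) (p : C) (ℓ : ℕ)
    (h : ∃ S R : Multiset (LinearOrder C),
        S + R = E ∧ Multiset.card S ≤ ℓ ∧ CondorcetWinner R p) :
    ∃ S R : Multiset (LinearOrder C),
      S + R = E ∧ Multiset.card S ≤ ℓ ∧ CondorcetWinner R p ∧
      ∀ v ∈ S, ¬ (∀ c : C, c ≠ p → v.lt p c) := by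
  classical
  obtain ⟨S, R, hSR, hcard, hwin⟩ := h
  set P : LinearOrder C → Prop := fun v => ∀ c : C, c ≠ p → v.lt p c with hP
  refine ⟨S.filter (fun v => ¬ P v), R + S.filter P, ?_, ?_, ?_, ?_⟩
  · rw [← hSR]
    conv_rhs => rw [← Multiset.filter_add_not P S]
    ac_rfl
  · exact le_trans (Multiset.card_le_card (Multiset.filter_le _ _)) hcard
  · intro c hc
    have hM0 : prefCount (S.filter P) c p = 0 := by
      rw [prefCount]
      apply Multiset.countP_eq_zero.2
      intro v hv
      have hvP : P v := (Multiset.mem_filter.1 hv).2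
      have h1 : v.lt p c := hvP c hc
      letI := v
      exact lt_asymm h1
    have h1 := prefCount_add R (S.filter P) c p
    have h2 := prefCount_add R (S.filter P) p c
    have := hwin c hc
    omega
  · intro v hv
    exact (Multiset.mem_filter.1 hv).2
end
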